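/- The polynomial z⁸ + 4z⁶ + 4z⁴ + 4z² + 1 is irreducible over ℚ, and none of its complex roots is a root of unity. Consequently, if θ ∈ (0, π) satisfies 2·cos θ = 2^{1/4}, then θ/π is irrational. -/

import Mathlib

open Polynomial Complex IntermediateField

noncomputable def tq : ℝ := (2:ℝ) ^ ((1:ℝ)/4)

lemma tq_pos : 0 < tq := Real.rpow_pos_of_pos (by norm_num) _

lemma tq_pow : tq ^ 4 = 2 := by
  rw [tq, ← Real.rpow_natCast ((2:ℝ) ^ ((1:ℝ)/4)) 4, ← Real.rpow_mul (by norm_num)]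
  norm_num

lemma tq_lt_two : tq < 2 := by
  by_contra h
  push_neg at h
  have : (2:ℝ)^4 ≤ tq^4 := pow_le_pow_left₀ (by norm_num) h 4
  rw [tq_pow] at this; norm_num at this

lemma tq_gt_one : 1 < tq := by
  by_contra h
  push_neg at h
  have : tq^4 ≤ 1^4 := pow_le_pow_left₀ (le_of_lt tq_pos) h 4
  rw [tq_pow] at this; norm_num at this

noncomputable def tC : ℂ := (tq : ℝ)

lemma tC_pow : tC ^ 4 = 2 := by
  rw [tC, ← Complex.ofReal_pow, tq_pow]; norm_num

lemma irr4 : Irreducible (X ^ 4 - C (2:ℚ)) := by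
  have hprim : (X ^ 4 - C (2:ℤ)).IsPrimitive := (monic_X_pow_sub_C 2 (by norm_num)).isPrimitive
  have h : Irreducible (X ^ 4 - C (2:ℤ)) := by
    apply Polynomial.irreducible_of_eisenstein_criterion (P := Ideal.span {2})
      (Ideal.span_singleton_prime (by norm_num) |>.mpr Int.prime_two)
    · rw [(monic_X_pow_sub_C (2:ℤ) (by norm_num)).leadingCoeff]
      intro h
      rw [Ideal.mem_span_singleton] at h
      norm_num at h
    · intro n hn
      rw [degree_X_pow_sub_C (by norm_num)] at hn
      have hn4 : n < 4 := by exact_mod_cast hn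
      interval_cases n <;>
        simp [coeff_X_pow, Ideal.mem_span_singleton, coeff_sub]
    · rw [degree_X_pow_sub_C (by norm_num)]; norm_num
    · rw [Ideal.span_singleton_pow, Ideal.mem_span_singleton]
      simp [coeff_X_pow, coeff_sub]
    · exact hprim
  have := (Polynomial.IsPrimitive.Int.irreducible_iff_irreducible_map_cast hprim).mp h
  simpa [Polynomial.map_sub, Polynomial.map_pow, C_ofNat] using this

lemma tC_integral : IsIntegral ℚ tC := by
  refine ⟨X ^ 4 - C 2, monic_X_pow_sub_C 2 (by norm_num), ?_⟩
  rw [← aeval_def]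
  simp [tC_pow]

lemma minpoly_tC : minpoly ℚ tC = X ^ 4 - C 2 := by
  refine (minpoly.eq_of_irreducible_of_monic irr4 ?_ (monic_X_pow_sub_C 2 (by norm_num))).symm
  simp [tC_pow]

noncomputable def RealIF : IntermediateField ℚ ℂ :=
  Subfield.toIntermediateField Complex.ofRealHom.fieldRange
    (fun q => ⟨(q : ℝ), by norm_num⟩)

lemma realIF_im {x : ℂ} (hx : x ∈ RealIF) : x.im = 0 := by
  obtain ⟨r, hr⟩ := hx
  rw [← hr]
  rfl

lemma F_le_realIF : ℚ⟮tC⟯ ≤ RealIF := by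
  rw [adjoin_le_iff]
  rintro x rfl
  exact ⟨tq, rfl⟩

lemma finrank_F : Module.finrank ℚ ℚ⟮tC⟯ = 4 := by
  rw [adjoin.finrank tC_integral, minpoly_tC]
  compute_degree!

noncomputable def Poct : ℚ[X] := X ^ 8 + C (4:ℚ) * X ^ 6 + C 4 * X ^ 4 + C 4 * X ^ 2 + 1

lemma Poct_monic : Poct.Monic := by
  have h : Poct = X ^ 8 + (C (4:ℚ) * X ^ 6 + C 4 * X ^ 4 + C 4 * X ^ 2 + 1) := by
    rw [Poct]; ring
  rw [h]
  apply monic_X_pow_add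
  refine lt_of_le_of_lt (?_ : _ ≤ (6 : WithBot ℕ)) (by norm_num)
  compute_degree

lemma Poct_natDegree : Poct.natDegree = 8 := by
  rw [Poct]
  compute_degree!

lemma Poct_aeval (z : ℂ) : aeval z Poct = z ^ 8 + 4 * z ^ 6 + 4 * z ^ 4 + 4 * z ^ 2 + 1 := by
  simp [Poct]

lemma octic_of_quart {z : ℂ} (hz : z ≠ 0) (h : (z + z⁻¹) ^ 4 = 2) :
    z ^ 8 + 4 * z ^ 6 + 4 * z ^ 4 + 4 * z ^ 2 + 1 = 0 := by
  have key : z ^ 8 + 4 * z ^ 6 + 4 * z ^ 4 + 4 * z ^ 2 + 1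
      = z ^ 4 * ((z + z⁻¹) ^ 4 - 2) := by
    field_simp
    ring
  rw [key, h]
  simp

noncomputable def th0 : ℝ := Real.arccos (tq / 2)

lemma th0_mem : th0 ∈ Set.Ioo 0 Real.pi := by
  constructor
  · apply Real.arccos_pos.mpr; nlinarith [tq_lt_two]
  · have h2 : th0 < Real.pi / 2 := Real.arccos_lt_pi_div_two.mpr (by nlinarith [tq_pos])
    linarith [Real.pi_pos]

lemma cos_th0 : Real.cos th0 = tq / 2 := by
  apply Real.cos_arccos <;> nlinarith [tq_pos, tq_lt_two]

lemma sin_th0_pos : 0 < Real.sin th0 :=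
  Real.sin_pos_of_pos_of_lt_pi th0_mem.1 th0_mem.2

noncomputable def z0 : ℂ := Complex.exp ((th0 : ℝ) * I)

lemma z0_ne : z0 ≠ 0 := Complex.exp_ne_zero _

lemma z0_sum : z0 + z0⁻¹ = tC := by
  rw [z0, ← Complex.exp_neg]
  have h1 : Complex.cos th0 = (Complex.exp (th0 * I) + Complex.exp (-(th0 * I))) / 2 := by
    rw [Complex.cos]; ring_nf
  have h2 : ((Real.cos th0 : ℝ) : ℂ) = Complex.cos th0 := Complex.ofReal_cos th0
  have h3 : ((Real.cos th0 : ℝ) : ℂ) = (tq/2 : ℝ) := by rw [cos_th0]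
  rw [tC]
  rw [h3, h1] at h2
  push_cast at h2 ⊢
  linear_combination -2 * h2

lemma z0_root : aeval z0 Poct = 0 := by
  rw [Poct_aeval]
  exact octic_of_quart z0_ne (by rw [z0_sum, tC_pow])

lemma z0_integral : IsIntegral ℚ z0 :=
  ⟨Poct, Poct_monic, by rw [← aeval_def]; exact z0_root⟩

lemma z0_im : z0.im = Real.sin th0 := by
  rw [z0, Complex.exp_ofReal_mul_I_im]

lemma z0_not_in_F : z0 ∉ ℚ⟮tC⟯ := by
  intro h
  have := realIF_im (F_le_realIF h)
  rw [z0_im] at this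
  exact absurd this (ne_of_gt sin_th0_pos)

set_option synthInstance.maxHeartbeats 1000000 in
set_option maxHeartbeats 2000000 in
lemma Poct_irreducible : Irreducible Poct := by
  set F := ℚ⟮tC⟯
  set t' : F := ⟨tC, mem_adjoin_simple_self ℚ tC⟩ with ht'
  set q : F[X] := X ^ 2 - C t' * X + 1 with hq
  have hqmonic : q.Monic := by
    have : q = X ^ 2 + (- (C t' * X) + 1) := by rw [hq]; ring
    rw [this]
    apply monic_X_pow_add
    refine lt_of_le_of_lt (?_ : _ ≤ (1 : WithBot ℕ)) (by norm_num)
    compute_degree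
  have halg : algebraMap F ℂ t' = tC := rfl
  have hqaeval : aeval z0 q = 0 := by
    rw [hq]
    simp only [map_add, map_sub, map_mul, map_pow, aeval_X, aeval_C, map_one, halg]
    have h1 : z0 * z0⁻¹ = 1 := mul_inv_cancel₀ z0_ne
    have h2 := z0_sum
    have : tC * z0 = z0 ^ 2 + 1 := by
      have := congrArg (· * z0) h2
      rw [add_mul, inv_mul_cancel₀ z0_ne] at this
      linear_combination -this
    rw [this]; ring
  have hz0intF : IsIntegral F z0 := ⟨q, hqmonic, by rw [← aeval_def]; exact hqaeval⟩
  have hqnd : q.natDegree = 2 := by rw [hq]; compute_degree!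
  have hdeg_le : (minpoly F z0).natDegree ≤ 2 := by
    rw [← hqnd]
    exact natDegree_le_of_dvd (minpoly.dvd F z0 hqaeval) hqmonic.ne_zero
  have hdeg_ne1 : (minpoly F z0).natDegree ≠ 1 := by
    intro h1
    rw [minpoly.natDegree_eq_one_iff] at h1
    obtain ⟨⟨w, hw⟩, hwz⟩ := h1
    exact z0_not_in_F (hwz ▸ hw)
  have hdeg_pos : 0 < (minpoly F z0).natDegree := minpoly.natDegree_pos hz0intF
  have hdeg2 : (minpoly F z0).natDegree = 2 := by omega
  have hrank2 : Module.finrank F F⟮z0⟯ = 2 := by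
    rw [adjoin.finrank hz0intF, hdeg2]
  have hFle : F ≤ ℚ⟮z0⟯ := by
    rw [adjoin_le_iff]
    rintro x rfl
    rw [← z0_sum]
    exact add_mem (mem_adjoin_simple_self ℚ z0)
      (inv_mem (mem_adjoin_simple_self ℚ z0))
  have hres : restrictScalars ℚ F⟮z0⟯ = ℚ⟮z0⟯ := by
    erw [restrictScalars_adjoin]
    apply le_antisymm
    · rw [adjoin_le_iff]
      rintro x (hx | rfl)
      · exact hFle hx
      · exact mem_adjoin_simple_self ℚ z0
    · exact IntermediateField.adjoin.mono ℚ _ _ (Set.subset_union_right)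
  have h8 : Module.finrank ℚ ℚ⟮z0⟯ = 8 := by
    rw [← hres]
    have htower := Module.finrank_mul_finrank ℚ F F⟮z0⟯
    rw [finrank_F, hrank2] at htower
    exact htower.symm
  have hmindeg : (minpoly ℚ z0).natDegree = 8 := by
    rw [← adjoin.finrank z0_integral, h8]
  obtain ⟨c, hc⟩ := minpoly.dvd ℚ z0 z0_root
  have hmne : minpoly ℚ z0 ≠ 0 := minpoly.ne_zero z0_integral
  have hcne : c ≠ 0 := by
    intro h0
    rw [h0, mul_zero] at hc
    exact Poct_monic.ne_zero hc
  have hcnd : c.natDegree = 0 := by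
    have := natDegree_mul hmne hcne
    rw [← hc, Poct_natDegree, hmindeg] at this
    omega
  have hcC : c = C (c.coeff 0) := eq_C_of_natDegree_eq_zero hcnd
  have hlc : c.coeff 0 = 1 := by
    have := congrArg leadingCoeff hc
    rw [Poct_monic.leadingCoeff, leadingCoeff_mul, (minpoly.monic z0_integral).leadingCoeff,
      one_mul] at this
    rw [hcC, leadingCoeff_C] at this
    exact this.symm
  have hPeq : Poct = minpoly ℚ z0 := by
    rw [hc, hcC, hlc, map_one, mul_one]
  rw [hPeq]
  exact minpoly.irreducible z0_integral

noncomputable def aR : ℝ := (tq + Real.sqrt (4 + tq ^ 2)) / 2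

lemma aR_gt_one : 1 < aR := by
  have h2 : Real.sqrt 4 ≤ Real.sqrt (4 + tq ^ 2) := by
    apply Real.sqrt_le_sqrt; nlinarith [tq_pos]
  have h4 : Real.sqrt 4 = 2 := by
    rw [show (4:ℝ) = 2^2 by norm_num, Real.sqrt_sq (by norm_num)]
  rw [aR]
  nlinarith [tq_gt_one]

lemma aR_eq : aR ^ 2 - 1 = aR * tq := by
  have hs : Real.sqrt (4 + tq ^ 2) ^ 2 = 4 + tq ^ 2 :=
    Real.sq_sqrt (by nlinarith [tq_pos])
  have h2a : 2 * aR - tq = Real.sqrt (4 + tq ^ 2) := by rw [aR]; ring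
  have hsq : (2 * aR - tq) ^ 2 = 4 + tq ^ 2 := by rw [h2a]; exact hs
  linear_combination hsq / 4

lemma aR_octic : aR ^ 8 - 4 * aR ^ 6 + 4 * aR ^ 4 - 4 * aR ^ 2 + 1 = 0 := by
  have h := aR_eq
  have h4 : (aR ^ 2 - 1) ^ 4 = 2 * aR ^ 4 := by
    rw [h]
    have : (aR * tq) ^ 4 = aR ^ 4 * tq ^ 4 := by ring
    rw [this, tq_pow]; ring
  nlinarith [h4]

noncomputable def z1 : ℂ := I * (aR : ℝ)

lemma z1_octic : z1 ^ 8 + 4 * z1 ^ 6 + 4 * z1 ^ 4 + 4 * z1 ^ 2 + 1 = 0 := by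
  have h2 : z1 ^ 2 = -((aR:ℂ) ^ 2) := by
    rw [z1]; linear_combination (aR:ℂ) ^ 2 * Complex.I_sq
  have key : z1 ^ 8 + 4 * z1 ^ 6 + 4 * z1 ^ 4 + 4 * z1 ^ 2 + 1
      = ((aR ^ 8 - 4 * aR ^ 6 + 4 * aR ^ 4 - 4 * aR ^ 2 + 1 : ℝ) : ℂ) := by
    push_cast
    linear_combination (z1^6 - z1^4*(aR:ℂ)^2 + z1^2*(aR:ℂ)^4 - (aR:ℂ)^6
      + 4*(z1^4 - z1^2*(aR:ℂ)^2 + (aR:ℂ)^4) + 4*(z1^2 - (aR:ℂ)^2) + 4) * h2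
  rw [key, aR_octic]
  norm_num

lemma part2 (z : ℂ) (hz : z ^ 8 + 4 * z ^ 6 + 4 * z ^ 4 + 4 * z ^ 2 + 1 = 0) :
    ¬ ∃ m : ℕ, 1 ≤ m ∧ z ^ m = 1 := by
  rintro ⟨m, hm, hzm⟩
  have hroot : aeval z Poct = 0 := by rw [Poct_aeval]; exact hz
  have hmin : Poct = minpoly ℚ z :=
    minpoly.eq_of_irreducible_of_monic Poct_irreducible hroot Poct_monic
  have hdvd : Poct ∣ (X ^ m - 1 : ℚ[X]) := by
    rw [hmin]
    apply minpoly.dvd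
    simp [hzm]
  obtain ⟨c, hc⟩ := hdvd
  have h1 : (aeval z1 (X ^ m - 1 : ℚ[X])) = 0 := by
    rw [hc, map_mul]
    have : aeval z1 Poct = 0 := by rw [Poct_aeval]; exact z1_octic
    rw [this, zero_mul]
  have h2 : z1 ^ m = 1 := by
    have : aeval z1 (X ^ m - 1 : ℚ[X]) = z1 ^ m - 1 := by simp
    rw [this] at h1
    linear_combination h1
  have habs : ‖z1‖ = aR := by
    rw [z1, norm_mul, Complex.norm_I, one_mul, Complex.norm_real, Real.norm_eq_abs,
      abs_of_pos (by linarith [aR_gt_one])]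
  have : ‖z1‖ ^ m = 1 := by rw [← norm_pow, h2, norm_one]
  rw [habs] at this
  have : 1 < aR ^ m := one_lt_pow₀ aR_gt_one (by omega)
  simp_all

lemma part3 (θ : ℝ) (hθ : θ ∈ Set.Ioo (0:ℝ) Real.pi)
    (hc : 2 * Real.cos θ = (2:ℝ) ^ ((1:ℝ)/4)) : Irrational (θ / Real.pi) := by
  rw [Irrational]
  intro ⟨q, hq⟩
  set z : ℂ := Complex.exp (θ * I) with hzdef
  have hzne : z ≠ 0 := Complex.exp_ne_zero _
  have hsum : z + z⁻¹ = ((2 * Real.cos θ : ℝ) : ℂ) := by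
    rw [hzdef, ← Complex.exp_neg]
    have h1 : Complex.cos θ = (Complex.exp (θ * I) + Complex.exp (-(θ * I))) / 2 := by
      rw [Complex.cos]; ring_nf
    have h2 : ((Real.cos θ : ℝ) : ℂ) = Complex.cos θ := Complex.ofReal_cos θ
    rw [h1] at h2
    push_cast
    linear_combination -2 * h2 + 2 * Complex.ofReal_cos θ
  have hq4 : (z + z⁻¹) ^ 4 = 2 := by
    rw [hsum, hc]
    rw [← Complex.ofReal_pow, ← Real.rpow_natCast ((2:ℝ) ^ ((1:ℝ)/4)) 4,
      ← Real.rpow_mul (by norm_num)]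
    norm_num
  have hoct := octic_of_quart hzne hq4
  apply part2 z hoct
  refine ⟨2 * q.den, by have := q.den_pos; omega, ?_⟩
  have hden : (q.den : ℝ) ≠ 0 := by positivity
  have hθeq : θ = q * Real.pi := by
    field_simp at hq
    linarith [hq]
  have : z ^ (2 * q.den) = Complex.exp ((q.num : ℂ) * (2 * Real.pi * I)) := by
    rw [hzdef, ← Complex.exp_nat_mul]
    congr 1
    rw [hθeq]
    push_cast
    have hqd : (q : ℝ) * q.den = q.num := by
      rw [Rat.cast_def]
      field_simp
    rw [show ((2:ℂ) * q.den * (q * Real.pi * I)) = ((q:ℝ) * (q.den:ℝ) : ℝ) * (2 * Real.pi * I) by push_cast; ring, hqd]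
    push_cast
    ring
  rw [this, Complex.exp_int_mul_two_pi_mul_I]

/-- `z⁸ + 4z⁶ + 4z⁴ + 4z² + 1` is irreducible over `ℚ`, none of its complex
roots is a root of unity, and consequently if `θ ∈ (0, π)` satisfies `2cos θ = 2^{1/4}`
then `θ/π` is irrational. -/
theorem octic_no_root_of_unity :
    Irreducible (X ^ 8 + C (4:ℚ) * X ^ 6 + C 4 * X ^ 4 + C 4 * X ^ 2 + 1 : Polynomial ℚ) ∧
    (∀ z : ℂ, z ^ 8 + 4 * z ^ 6 + 4 * z ^ 4 + 4 * z ^ 2 + 1 = 0 →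
      ¬ ∃ m : ℕ, 1 ≤ m ∧ z ^ m = 1) ∧
    (∀ θ : ℝ, θ ∈ Set.Ioo (0 : ℝ) Real.pi → 2 * Real.cos θ = (2 : ℝ) ^ ((1 : ℝ) / 4) →
      Irrational (θ / Real.pi)) := by
  exact ⟨Poct_irreducible, part2, part3⟩
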